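/- Let σ be a cyclic order on [n] and let F be a k-wise intersecting family of intervals of length r in σ, where r ≤ (k-1)n/k. Then |F| ≤ r. -/

import Mathlib

/-- The `σ`-interval of length `r` starting at position `x` in the cyclic order `σ`. -/
def cInterval (n r : ℕ) (σ : ZMod n ≃ Fin n) (x : ZMod n) : Finset (Fin n) :=
  (Finset.range r).image (fun (i : ℕ) => σ (x + (i : ZMod n)))

section helpers

variable {n : ℕ} [NeZero n]

private lemma castval (a : ZMod n) : ((a.val : ℕ) : ZMod n) = a :=
  ZMod.natCast_rightInverse a

private lemma valsub (x y : ℕ) (hy : y < n) :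
    ((x : ZMod n) - (y : ZMod n)).val = (x + (n - y)) % n := by
  have h1 : ((n - y : ℕ) : ZMod n) = -(y : ZMod n) := by
    rw [Nat.cast_sub hy.le, ZMod.natCast_self, zero_sub]
  have h2 : ((x : ZMod n) - (y : ZMod n)) = (((x + (n - y)) : ℕ) : ZMod n) := by
    rw [Nat.cast_add, h1]; ring
  rw [h2, ZMod.val_natCast]

private lemma mem_cInterval {r : ℕ} (σ : ZMod n ≃ Fin n) (x : ZMod n) (p : Fin n) :
    p ∈ cInterval n r σ x ↔ (σ.symm p - x).val < r := by
  simp only [cInterval, Finset.mem_image, Finset.mem_range]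
  constructor
  · rintro ⟨i, hi, rfl⟩
    rw [Equiv.symm_apply_apply, add_sub_cancel_left]
    calc (i : ZMod n).val = i % n := ZMod.val_natCast n i
      _ ≤ i := Nat.mod_le i n
      _ < r := hi
  · intro h
    refine ⟨(σ.symm p - x).val, h, ?_⟩
    have h2 : x + (((σ.symm p - x).val : ℕ) : ZMod n) = σ.symm p := by
      rw [castval]; ring
    rw [h2, Equiv.apply_symm_apply]

end helpers

/-- Frankl's circle lemma: a `k`-wise intersecting family of intervals of length
`r ≤ (k-1)n/k` in a cyclic order on `[n]` has at most `r` members. -/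
theorem kwise_intersecting_intervals (n r k : ℕ) (hk : 2 ≤ k) (hn : 0 < n)
    (σ : ZMod n ≃ Fin n) (F : Finset (Finset (Fin n)))
    (hint : ∀ A ∈ F, ∃ x : ZMod n, A = cInterval n r σ x)
    (hkw : ∀ f : Fin k → Finset (Fin n), (∀ i, f i ∈ F) → ∃ v, ∀ i, v ∈ f i)
    (hr : k * r ≤ (k - 1) * n) :
    F.card ≤ r := by
  haveI : NeZero n := ⟨hn.ne'⟩
  by_contra hcon
  push_neg at hcon
  -- dispose of the case r = 0
  rcases Nat.eq_zero_or_pos r with hr0 | hr1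
  · obtain ⟨A, hA⟩ := Finset.card_pos.mp (show 0 < F.card by omega)
    obtain ⟨v, hv⟩ := hkw (fun _ => A) (fun _ => hA)
    obtain ⟨x, hx⟩ := hint A hA
    have hv0 := hv ⟨0, by omega⟩
    rw [hx, hr0] at hv0
    simp [cInterval] at hv0
  -- basic arithmetic setup
  have hrn : r ≤ n := by
    by_contra hgt
    push_neg at hgt
    have h1 : (k - 1) * n ≤ (k - 1) * r := Nat.mul_le_mul_left (k - 1) hgt.le
    have h4 : (k - 1) * r = k * r - r := by rw [Nat.sub_mul, one_mul]
    have h5 : r ≤ k * r := Nat.le_mul_of_pos_left r (by omega)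
    omega
  set L := n - r with hL
  have hkL : n ≤ k * L := by
    have h1 : k * n = k * r + k * L := by rw [← Nat.mul_add]; congr 1; omega
    have h2 : (k - 1) * n = k * n - n := by rw [Nat.sub_mul, one_mul]
    have h3 : n ≤ k * n := Nat.le_mul_of_pos_left n (by omega)
    omega
  have hL1 : 1 ≤ L := by
    rcases Nat.eq_zero_or_pos L with h | h
    · rw [h, Nat.mul_zero] at hkL; omega
    · exact h
  have hLn : L < n := by omega
  -- the number of points we shall use : k' = ⌈n / L⌉
  set d := (n - 1) / L with hdd
  set e := (n - 1) % L with hee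
  have hdm : L * d + e = n - 1 := Nat.div_add_mod (n - 1) L
  have hmlt : e < L := Nat.mod_lt _ (by omega)
  set k' := d + 1 with hk'
  have hk'L : k' * L = L * d + L := by rw [hk']; ring
  have hk'low : n ≤ k' * L := by omega
  have hk'high : k' * L ≤ n - 1 + L := by omega
  have hk'k : k' ≤ k := by
    have h2 : n ≤ L * k := by rw [Nat.mul_comm]; exact hkL
    have h1 : L * d < L * k := by omega
    have h3 := Nat.lt_of_mul_lt_mul_left h1
    omega
  have hk'2 : 2 ≤ k' := by
    have h1 : 1 ≤ d := by
      rw [hdd]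
      exact (Nat.one_le_div_iff (by omega)).mpr (by omega)
    omega
  set m := k' * L - n with hm
  have hmL : m < L := by omega
  have hnm : k' * L = n + m := by omega
  -- choose a start for every interval in the family
  choose start hstart using hint
  set S : Finset (ZMod n) := F.attach.image (fun A => start A.1 A.2) with hS
  have hScard : S.card = F.card := by
    rw [hS, Finset.card_image_of_injOn, Finset.card_attach]
    intro A hA' B hB' hAB
    simp only at hAB
    exact Subtype.ext (by rw [hstart A.1 A.2, hstart B.1 B.2, hAB])
  have hSmem : ∀ x ∈ S, cInterval n r σ x ∈ F := by
    intro x hx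
    rw [hS] at hx
    simp only [Finset.mem_image, Finset.mem_attach, true_and] at hx
    obtain ⟨A, hA⟩ := hx
    rw [← hA, ← hstart A.1 A.2]
    exact A.2
  have hSn : S.card ≤ n := by
    have h1 := Finset.card_le_univ S
    rwa [ZMod.card] at h1
  have hCcard : Sᶜ.card ≤ L - 1 := by
    rw [Finset.card_compl, ZMod.card]
    omega
  -- a point of S and a free residue class
  obtain ⟨s₀, hs₀⟩ : S.Nonempty := Finset.card_pos.mp (by omega)
  set Bl := Sᶜ.image (fun c => (m + (c - s₀).val) % L) with hBl
  have hBlcard : Bl.card < L :=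
    lt_of_le_of_lt Finset.card_image_le (by omega)
  obtain ⟨a, haL, haB⟩ : ∃ a, a < L ∧ a ∉ Bl := by
    by_contra hc
    push_neg at hc
    have hsub : Finset.range L ⊆ Bl := by
      intro a ha
      exact hc a (Finset.mem_range.mp ha)
    have := Finset.card_le_card hsub
    rw [Finset.card_range] at this
    omega
  -- the piercing points
  set O : ℕ → ℕ := fun j => a + j * L - m with hO
  set t : ℕ → ZMod n := fun j => s₀ + ((O j : ℕ) : ZMod n) with ht
  have hObound : ∀ j, j < k' → O j ≤ n - 1 := by
    intro j hj
    have h1 : j * L ≤ (k' - 1) * L := Nat.mul_le_mul_right L (by omega)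
    have h2 : (k' - 1) * L = k' * L - L := by rw [Nat.sub_mul, one_mul]
    simp only [hO]
    omega
  have hOlast : O (k' - 1) = a + (n - L) := by
    have h2 : (k' - 1) * L = k' * L - L := by rw [Nat.sub_mul, one_mul]
    simp only [hO]
    omega
  have htS : ∀ j, j < k' → t j ∈ S := by
    intro j hj
    by_contra htj
    rcases Nat.eq_zero_or_pos (O j) with h0 | h1
    · apply htj
      have : t j = s₀ := by
        rw [ht]
        simp only [h0, Nat.cast_zero, add_zero]
      rw [this]
      exact hs₀
    · have htC : t j ∈ Sᶜ := Finset.mem_compl.mpr htj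
      have hval : (t j - s₀).val = O j := by
        rw [ht]
        simp only []
        rw [add_sub_cancel_left]
        exact ZMod.val_cast_of_lt (by have := hObound j hj; omega)
      have hmem : (m + (t j - s₀).val) % L ∈ Bl := by
        rw [hBl]
        exact Finset.mem_image_of_mem _ htC
      rw [hval] at hmem
      have haj : m + O j = a + j * L := by
        simp only [hO] at h1 ⊢
        omega
      rw [haj, Nat.add_mul_mod_self_right, Nat.mod_eq_of_lt haL] at hmem
      exact haB hmem
  -- the piercing property
  have hpierce : ∀ u, u < n → ∃ j, j < k' ∧
      1 ≤ (O j + (n - u)) % n ∧ (O j + (n - u)) % n ≤ L := by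
    intro u hu
    have hO0 : O 0 ≤ a := by simp only [hO]; omega
    by_cases hcase : a + (n - L) ≤ u
    · refine ⟨0, by omega, ?_, ?_⟩
      · have hlt : O 0 + (n - u) < n := by omega
        rw [Nat.mod_eq_of_lt hlt]
        omega
      · have hlt : O 0 + (n - u) < n := by omega
        rw [Nat.mod_eq_of_lt hlt]
        omega
    · push_neg at hcase
      have hex : ∃ j, u < O j := ⟨k' - 1, by rw [hOlast]; omega⟩
      have hju : u < O (Nat.find hex) := Nat.find_spec hex
      have hjle : Nat.find hex ≤ k' - 1 := Nat.find_le (by rw [hOlast]; omega)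
      rcases Nat.eq_zero_or_pos (Nat.find hex) with hj0 | hjpos
      · refine ⟨0, by omega, ?_, ?_⟩ <;>
        · rw [hj0] at hju
          have hrw : O 0 + (n - u) = (O 0 - u) + n := by omega
          rw [hrw, Nat.add_mod_right, Nat.mod_eq_of_lt (by omega)]
          omega
      · have hprev : ¬ u < O (Nat.find hex - 1) :=
          Nat.find_min hex (by omega)
        push_neg at hprev
        have hstep : O (Nat.find hex) ≤ O (Nat.find hex - 1) + L := by
          obtain ⟨j', hj'⟩ : ∃ j', Nat.find hex = j' + 1 := ⟨Nat.find hex - 1, by omega⟩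
          rw [hj']
          simp only [hO, Nat.add_sub_cancel]
          have hid : (j' + 1) * L = j' * L + L := by ring
          rw [hid]
          omega
        refine ⟨Nat.find hex, by omega, ?_, ?_⟩ <;>
        · have hrw : O (Nat.find hex) + (n - u) = (O (Nat.find hex) - u) + n := by omega
          rw [hrw, Nat.add_mod_right, Nat.mod_eq_of_lt (by omega)]
          omega
  -- apply the k-wise intersecting hypothesis
  obtain ⟨v, hv⟩ := hkw (fun i => cInterval n r σ (t (if i.val < k' then i.val else 0)))
    (fun i => hSmem _ (htS _ (by by_cases hik : i.val < k' <;> simp [hik] <;> omega)))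
  have hvall : ∀ j, j < k' → (σ.symm v - t j).val < r := by
    intro j hj
    have h := hv ⟨j, lt_of_lt_of_le hj hk'k⟩
    rw [mem_cInterval] at h
    simpa [hj] using h
  set q := σ.symm v with hq
  have hun : (q - s₀).val < n := ZMod.val_lt _
  obtain ⟨j, hjk', h1, h2⟩ := hpierce (q - s₀).val hun
  set V := (O j + (n - (q - s₀).val)) % n with hV
  have htd : (t j - q).val = V := by
    have he : t j - q = ((O j : ℕ) : ZMod n) - (((q - s₀).val : ℕ) : ZMod n) := by
      rw [castval, ht]
      ring
    rw [he, hV, valsub _ _ hun]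
  have hne : t j - q ≠ 0 := by
    intro h0
    rw [h0, ZMod.val_zero] at htd
    omega
  have hqt : (q - t j).val = n - (t j - q).val := by
    have hns : q - t j = -(t j - q) := by ring
    rw [hns, ZMod.neg_val, if_neg hne]
  have hlt := hvall j hjk'
  omega
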